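/- Let A be an n×n Hermitian matrix with eigenvalues λ₁(A),…,λₙ(A) and orthonormal eigenvectors v₁,…,vₙ, and let M_j be the j-th principal minor. For any complex λ not equal to any eigenvalue of A: det(λ·I_{n−1} − M_j) / det(λ·I_n − A) = Σ_{i=1}^n |v_{i,j}|² / (λ − λ_i(A)). -/

import Mathlib

open Matrix

/-- Resolvent identity: the `(j,j)` entry of `(λ I - A)⁻¹` via eigenvector components. -/
theorem resolvent_diagonal_entry {n : ℕ}
    (A : Matrix (Fin (n+1)) (Fin (n+1)) ℂ) (hA : A.IsHermitian)
    (lam : Fin (n+1) → ℝ) (v : Fin (n+1) → Fin (n+1) → ℂ)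
    (horth : ∀ i k, dotProduct (star (v i)) (v k) = if i = k then 1 else 0)
    (heig : ∀ i, A.mulVec (v i) = (lam i : ℂ) • v i)
    (z : ℂ) (hz : ∀ i, z ≠ (lam i : ℂ)) (j : Fin (n+1)) :
    (z • (1 : Matrix (Fin n) (Fin n) ℂ) - A.submatrix j.succAbove j.succAbove).det
        / (z • (1 : Matrix (Fin (n+1)) (Fin (n+1)) ℂ) - A).det
      = ∑ i, (‖v i j‖ : ℂ) ^ 2 / (z - (lam i : ℂ)) := by
  have hzne : ∀ i, z - (lam i : ℂ) ≠ 0 := fun i => sub_ne_zero.mpr (hz i)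
  set B := z • (1 : Matrix (Fin (n+1)) (Fin (n+1)) ℂ) - A with hB
  set C : Matrix (Fin (n+1)) (Fin (n+1)) ℂ :=
    ∑ i, (z - (lam i : ℂ))⁻¹ • Matrix.vecMulVec (v i) (star (v i)) with hC
  -- completeness of the orthonormal system
  set V : Matrix (Fin (n+1)) (Fin (n+1)) ℂ := Matrix.of v with hV
  have hVVh : V * V.conjTranspose = 1 := by
    ext i k
    have h1 := horth i k
    simp only [dotProduct, Pi.star_apply] at h1
    simp only [Matrix.mul_apply, Matrix.conjTranspose_apply, Matrix.one_apply, hV,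
      Matrix.of_apply]
    have : (∑ x, v i x * star (v k x)) = star (∑ x, star (v i x) * v k x) := by
      rw [star_sum]; exact Finset.sum_congr rfl fun x _ => by simp [mul_comm]
    rw [this, h1]
    by_cases h : i = k <;> simp [h]
  have hVhV : V.conjTranspose * V = 1 := mul_eq_one_comm.mp hVVh
  have hVV : ∀ p q : Fin (n+1), (∑ i, v i p * star (v i q)) = if p = q then (1:ℂ) else 0 := by
    intro p q
    have h1 := congrFun (congrFun hVhV q) p
    simp only [Matrix.mul_apply, Matrix.conjTranspose_apply, Matrix.one_apply, hV,
      Matrix.of_apply] at h1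
    calc (∑ i, v i p * star (v i q)) = ∑ i, star (v i q) * v i p :=
          Finset.sum_congr rfl fun i _ => mul_comm _ _
      _ = if q = p then 1 else 0 := h1
      _ = if p = q then 1 else 0 := by simp [eq_comm]
  -- B * C = 1
  have hmulvv : ∀ i, B * Matrix.vecMulVec (v i) (star (v i))
      = (z - (lam i : ℂ)) • Matrix.vecMulVec (v i) (star (v i)) := by
    intro i
    have hBv : B.mulVec (v i) = (z - (lam i : ℂ)) • v i := by
      rw [hB, Matrix.sub_mulVec, Matrix.smul_mulVec, Matrix.one_mulVec, heig i,
        sub_smul]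
    ext p q
    simp only [Matrix.mul_apply, Matrix.vecMulVec_apply, Matrix.smul_apply, smul_eq_mul]
    calc (∑ l, B p l * (v i l * star (v i q)))
        = (∑ l, B p l * v i l) * star (v i q) := by
          rw [Finset.sum_mul]; exact Finset.sum_congr rfl fun l _ => (mul_assoc _ _ _).symm
      _ = ((z - (lam i : ℂ)) • v i) p * star (v i q) := by
          rw [← hBv]; rfl
      _ = (z - (lam i : ℂ)) * (v i p * star (v i q)) := by
          simp [mul_assoc]
  have hBC : B * C = 1 := by
    rw [hC, Finset.mul_sum]
    have : ∀ i ∈ Finset.univ, B * ((z - (lam i : ℂ))⁻¹ • Matrix.vecMulVec (v i) (star (v i)))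
        = Matrix.vecMulVec (v i) (star (v i)) := by
      intro i _
      rw [Matrix.mul_smul, hmulvv i, smul_smul, inv_mul_cancel₀ (hzne i), one_smul]
    rw [Finset.sum_congr rfl this]
    ext p q
    simp only [Matrix.sum_apply, Matrix.vecMulVec_apply, Matrix.one_apply]
    exact hVV p q
  -- det B ≠ 0 and B⁻¹ = C
  have hdet : B.det ≠ 0 := by
    intro h
    have := congrArg Matrix.det hBC
    rw [Matrix.det_mul, h, zero_mul, Matrix.det_one] at this
    exact zero_ne_one this
  have hBinv : B⁻¹ = C := Matrix.inv_eq_right_inv hBC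
  -- numerator is the adjugate entry
  have hadj : (z • (1 : Matrix (Fin n) (Fin n) ℂ) - A.submatrix j.succAbove j.succAbove).det
      = B.adjugate j j := by
    rw [Matrix.adjugate_fin_succ_eq_det_submatrix]
    have hsub : B.submatrix j.succAbove j.succAbove
        = z • (1 : Matrix (Fin n) (Fin n) ℂ) - A.submatrix j.succAbove j.succAbove := by
      rw [hB]
      ext p q
      simp [Matrix.submatrix_apply, Matrix.one_apply, Fin.succAbove_right_inj]
    rw [hsub, Even.neg_one_pow ⟨(j:ℕ), rfl⟩, one_mul]
  -- entry of inverse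
  have hinv : B⁻¹ j j = B.adjugate j j / B.det := by
    rw [Matrix.inv_def, Ring.inverse_eq_inv']
    simp [div_eq_inv_mul]
  have hsq : ∀ w : ℂ, w * (starRingEnd ℂ) w = (‖w‖ : ℂ) ^ 2 := fun w => by
    rw [Complex.mul_conj, Complex.normSq_eq_norm_sq]
    push_cast
    ring
  rw [hadj, ← hinv, hBinv, hC]
  simp only [Matrix.sum_apply, Matrix.smul_apply, Matrix.vecMulVec_apply, smul_eq_mul,
    Pi.star_apply, RCLike.star_def, hsq]
  refine Finset.sum_congr rfl fun i _ => ?_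
  field_simp
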